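/- Let f : ℝ^d → ℝ satisfy the SPB growth estimate with parameters R₁, R₂, m and let σ > 0. Set 𝔄 = 2^{2m−2} R₁ σ^m (m+d)^{m/2} + R₂, 𝔅 = 2^{2m−2} R₁ and ℭ = 2^{m−1} R₁. Then the Gaussian smoothing satisfies |f_σ(x) − f_σ(y)| ≤ (𝔄 + 𝔅‖x‖^m + ℭ‖y − x‖^m) ‖x − y‖ for all x, y ∈ ℝ^d. -/

import Mathlib

open MeasureTheory Filter Set
open scoped InnerProductSpace ENNReal Topology Real NNReal

/-- The standard Gaussian probability measure `N(0, I)` on `ℝ^d`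
(with density `(2π)^{-d/2} e^{-‖u‖²/2}`), realized as the product of `d`
standard one-dimensional Gaussians. -/
noncomputable def stdGaussian (d : ℕ) : Measure (EuclideanSpace ℝ (Fin d)) :=
  Measure.map (MeasurableEquiv.toLp 2 (Fin d → ℝ))
    (Measure.pi fun _ : Fin d => ProbabilityTheory.gaussianReal 0 1)

instance (d : ℕ) : IsProbabilityMeasure (stdGaussian d) :=
  Measure.isProbabilityMeasure_map (MeasurableEquiv.toLp 2 (Fin d → ℝ)).measurable.aemeasurable

/-- `f` satisfies the SPB growth estimate with parameters `R1, R2, m`: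
`|f x - f y| ≤ (2^{m-1} R₁ ‖x‖^m + 2^{m-1} R₁ ‖y-x‖^m + R₂) ‖x-y‖`. -/
def SPBGrowth {d : ℕ} (f : EuclideanSpace ℝ (Fin d) → ℝ) (R1 R2 : ℝ) (m : ℕ) : Prop :=
  ∀ x y : EuclideanSpace ℝ (Fin d),
    |f x - f y| ≤ ((2 : ℝ) ^ ((m : ℤ) - 1) * R1 * ‖x‖ ^ m
      + (2 : ℝ) ^ ((m : ℤ) - 1) * R1 * ‖y - x‖ ^ m + R2) * ‖x - y‖

/-- The Gaussian smoothing `f_σ(x) = E_{u ∼ N(0,I)}[f (x + σ u)]`. -/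
noncomputable def gsmooth {d : ℕ} (σ : ℝ) (f : EuclideanSpace ℝ (Fin d) → ℝ)
    (x : EuclideanSpace ℝ (Fin d)) : ℝ :=
  ∫ u, f (x + σ • u) ∂(stdGaussian d)

/-- The gradient of the Gaussian smoothing:
`∇f_σ(x) = σ⁻¹ E_{u ∼ N(0,I)}[f (x + σ u) u]`. -/
noncomputable def gsGrad {d : ℕ} (σ : ℝ) (f : EuclideanSpace ℝ (Fin d) → ℝ)
    (x : EuclideanSpace ℝ (Fin d)) : EuclideanSpace ℝ (Fin d) :=
  σ⁻¹ • ∫ u, f (x + σ • u) • u ∂(stdGaussian d)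

section Aux

open Real ProbabilityTheory

/-- Pointwise bound: `x^p ≤ (p/(e t))^p e^{t x}`. -/
lemma aux_rpow_le_exp {x t p : ℝ} (hx : 0 ≤ x) (ht : 0 < t) (hp : 0 < p) :
    x ^ p ≤ (p / (Real.exp 1 * t)) ^ p * Real.exp (t * x) := by
  rcases eq_or_lt_of_le hx with h | hx
  · rw [← h, Real.zero_rpow hp.ne']
    positivity
  · have h1 : t * x / p ≤ Real.exp (t * x / p - 1) := by
      have := Real.add_one_le_exp (t * x / p - 1)
      linarith
    have h2 : (t * x / p) ^ p ≤ Real.exp (t * x - p) := by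
      calc (t * x / p) ^ p ≤ (Real.exp (t * x / p - 1)) ^ p :=
            Real.rpow_le_rpow (by positivity) h1 hp.le
        _ = Real.exp ((t * x / p - 1) * p) := (Real.exp_mul _ _).symm
        _ = Real.exp (t * x - p) := by
            congr 1
            field_simp
    have hxp : x ^ p = (t * x / p) ^ p * (p / t) ^ p := by
      rw [← Real.mul_rpow (by positivity) (by positivity)]
      congr 1
      field_simp
    rw [hxp]
    have h3 : (p / (Real.exp 1 * t)) ^ p * Real.exp (t * x)
        = Real.exp (t * x - p) * (p / t) ^ p := by
      rw [show p / (Real.exp 1 * t) = (p / t) * (Real.exp 1)⁻¹ by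
          rw [div_mul_eq_div_div_swap, div_eq_mul_inv],
        Real.mul_rpow (by positivity) (by positivity), Real.inv_rpow (Real.exp_pos 1).le,
        Real.exp_one_rpow, Real.exp_sub]
      ring
    rw [h3]
    exact mul_le_mul_of_nonneg_right h2 (Real.rpow_nonneg (by positivity) _)

lemma aux_pow_half (a : ℝ) (ha : 0 ≤ a) (n : ℕ) : a ^ n = (a ^ 2) ^ ((n : ℝ) / 2) := by
  rw [← Real.rpow_natCast a 2, ← Real.rpow_mul ha, ← Real.rpow_natCast a n]
  congr 1
  push_cast
  ring

/-- The final arithmetic estimate for the moment bound. -/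
lemma aux_final (D P : ℝ) (hD : 0 < D) (hP : 0 < P) :
    (P / (Real.exp 1 * (P / (D + 2 * P)))) ^ P * (1 - 2 * (P / (D + 2 * P))) ^ (-(D : ℝ) / 2)
      ≤ (D + 2 * P) ^ P := by
  have hden : 0 < D + 2 * P := by linarith
  have ht1 : P / (Real.exp 1 * (P / (D + 2 * P))) = (D + 2 * P) / Real.exp 1 := by
    field_simp <;> ring
  have ht2 : 1 - 2 * (P / (D + 2 * P)) = D / (D + 2 * P) := by
    field_simp <;> ring
  rw [ht1, ht2]
  have h3 : (D / (D + 2 * P)) ^ (-(D : ℝ) / 2) = ((D + 2 * P) / D) ^ (D / 2) := by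
    rw [show -(D : ℝ) / 2 = -(D / 2) by ring, Real.rpow_neg (by positivity),
      ← Real.inv_rpow (by positivity), inv_div]
  rw [h3]
  have h4 : ((D + 2 * P) / D) ^ (D / 2) ≤ Real.exp P := by
    have h5 : (D + 2 * P) / D ≤ Real.exp (2 * P / D) := by
      have h6 := Real.add_one_le_exp (2 * P / D)
      have h7 : (D + 2 * P) / D = 2 * P / D + 1 := by field_simp <;> ring
      rw [h7]; exact h6
    calc ((D + 2 * P) / D) ^ (D / 2) ≤ (Real.exp (2 * P / D)) ^ (D / 2) :=
          Real.rpow_le_rpow (by positivity) h5 (by positivity)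
      _ = Real.exp P := by
          rw [← Real.exp_mul]
          congr 1
          field_simp <;> ring
  have h8 : ((D + 2 * P) / Real.exp 1) ^ P = (D + 2 * P) ^ P / Real.exp P := by
    rw [Real.div_rpow hden.le (Real.exp_pos 1).le, Real.exp_one_rpow]
  rw [h8]
  calc (D + 2 * P) ^ P / Real.exp P * ((D + 2 * P) / D) ^ (D / 2)
      ≤ (D + 2 * P) ^ P / Real.exp P * Real.exp P :=
        mul_le_mul_of_nonneg_left h4 (by positivity)
    _ = (D + 2 * P) ^ P := div_mul_cancel₀ _ (Real.exp_ne_zero P)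

/-- Integration against the 1D standard Gaussian via its density. -/
lemma gauss1d_eq (g : ℝ → ℝ) :
    ∫ x, g x ∂(gaussianReal 0 1) = ∫ x, gaussianPDFReal 0 1 x * g x := by
  rw [gaussianReal_of_var_ne_zero 0 one_ne_zero]
  have h : gaussianPDF 0 1 = fun x => ((gaussianPDFReal 0 1 x).toNNReal : ℝ≥0∞) := rfl
  rw [h, integral_withDensity_eq_integral_smul
    ((measurable_gaussianPDFReal 0 1).real_toNNReal) g]
  congr 1
  ext x
  simp [NNReal.smul_def, Real.coe_toNNReal _ (gaussianPDFReal_nonneg 0 1 x)]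

lemma gauss1d_integrable_iff (g : ℝ → ℝ) :
    Integrable g (gaussianReal 0 1) ↔
      Integrable (fun x => gaussianPDFReal 0 1 x * g x) volume := by
  rw [gaussianReal_of_var_ne_zero 0 one_ne_zero]
  have h : gaussianPDF 0 1 = fun x => ((gaussianPDFReal 0 1 x).toNNReal : ℝ≥0∞) := rfl
  rw [h, integrable_withDensity_iff_integrable_smul
    ((measurable_gaussianPDFReal 0 1).real_toNNReal)]
  apply integrable_congr
  filter_upwards with x
  simp [NNReal.smul_def, Real.coe_toNNReal _ (gaussianPDFReal_nonneg 0 1 x)]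

lemma gauss1d_pdf_exp (t x : ℝ) :
    gaussianPDFReal 0 1 x * Real.exp (t * x ^ 2)
      = (Real.sqrt (2 * π))⁻¹ * Real.exp (-(1 / 2 - t) * x ^ 2) := by
  simp only [gaussianPDFReal, NNReal.coe_one, mul_one, sub_zero]
  rw [mul_assoc, ← Real.exp_add]
  congr 2
  ring

lemma gauss1d_mgf {t : ℝ} (ht : t < 1 / 2) :
    (∫ x, Real.exp (t * x ^ 2) ∂(gaussianReal 0 1) = (1 - 2 * t) ^ (-(1 : ℝ) / 2))
      ∧ Integrable (fun x => Real.exp (t * x ^ 2)) (gaussianReal 0 1) := by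
  have hb : 0 < 1 / 2 - t := by linarith
  have hint : Integrable (fun x => (Real.sqrt (2 * π))⁻¹ * Real.exp (-(1 / 2 - t) * x ^ 2))
      volume := (integrable_exp_neg_mul_sq hb).const_mul _
  constructor
  · rw [gauss1d_eq]
    simp_rw [gauss1d_pdf_exp t]
    rw [integral_const_mul, integral_gaussian]
    have hsπ : (0 : ℝ) < Real.sqrt π := Real.sqrt_pos.mpr Real.pi_pos
    have hsb : (0 : ℝ) < Real.sqrt (1 / 2 - t) := Real.sqrt_pos.mpr hb
    have hs2 : (0 : ℝ) < Real.sqrt 2 := by positivity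
    rw [show (1 : ℝ) - 2 * t = 2 * (1 / 2 - t) by ring,
      show -(1 : ℝ) / 2 = -(1 / 2 : ℝ) by ring, Real.rpow_neg (by positivity),
      ← Real.sqrt_eq_rpow, Real.sqrt_mul (by norm_num : (0:ℝ) ≤ 2),
      Real.sqrt_div Real.pi_pos.le, Real.sqrt_mul (by norm_num : (0:ℝ) ≤ 2)]
    have hs12 : (0:ℝ) < Real.sqrt (1 - 2 * t) := Real.sqrt_pos.mpr (by linarith)
    field_simp
  · rw [gauss1d_integrable_iff]
    exact hint.congr (Eventually.of_forall fun x => (gauss1d_pdf_exp t x).symm)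

lemma pi_prod_integral (d : ℕ) (g : ℝ → ℝ) :
    ∫ v : Fin d → ℝ, ∏ i, g (v i) ∂(Measure.pi fun _ : Fin d => gaussianReal 0 1)
      = (∫ x, g x ∂(gaussianReal 0 1)) ^ d := by
  letI : MeasureSpace ℝ := ⟨gaussianReal 0 1⟩
  haveI : SigmaFinite (volume : Measure ℝ) := inferInstanceAs (SigmaFinite (gaussianReal 0 1))
  rw [MeasureTheory.integral_fintype_prod_eq_pow g, Fintype.card_fin]

lemma pi_prod_integrable (d : ℕ) (g : ℝ → ℝ) (hg : Integrable g (gaussianReal 0 1)) :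
    Integrable (fun v : Fin d → ℝ => ∏ i, g (v i))
      (Measure.pi fun _ : Fin d => gaussianReal 0 1) := by
  letI : MeasureSpace ℝ := ⟨gaussianReal 0 1⟩
  haveI : SigmaFinite (volume : Measure ℝ) := inferInstanceAs (SigmaFinite (gaussianReal 0 1))
  rw [show (Measure.pi fun _ : Fin d => gaussianReal 0 1) = (volume : Measure (Fin d → ℝ))
    from rfl]
  exact Integrable.fintype_prod (f := fun _ : Fin d => g) (fun _ => hg)

lemma stdGaussian_norm_sq (d : ℕ) (v : Fin d → ℝ) :
    ‖(MeasurableEquiv.toLp 2 (Fin d → ℝ)) v‖ ^ 2 = ∑ i, v i ^ 2 := by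
  rw [EuclideanSpace.norm_eq, Real.sq_sqrt (by positivity)]
  refine Finset.sum_congr rfl fun i _ => ?_
  have : ((MeasurableEquiv.toLp 2 (Fin d → ℝ)) v) i = v i := rfl
  rw [this, Real.norm_eq_abs, sq_abs]

lemma stdGaussian_mgf (d : ℕ) {t : ℝ} (ht : t < 1 / 2) :
    Integrable (fun u : EuclideanSpace ℝ (Fin d) => Real.exp (t * ‖u‖ ^ 2)) (stdGaussian d)
      ∧ ∫ u, Real.exp (t * ‖u‖ ^ 2) ∂(stdGaussian d) = (1 - 2 * t) ^ (-(d : ℝ) / 2) := by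
  have hnorm : ∀ v : Fin d → ℝ,
      Real.exp (t * ‖(MeasurableEquiv.toLp 2 (Fin d → ℝ)) v‖ ^ 2)
        = ∏ i, Real.exp (t * v i ^ 2) := by
    intro v
    rw [stdGaussian_norm_sq, Finset.mul_sum, Real.exp_sum]
  constructor
  · unfold _root_.stdGaussian
    rw [integrable_map_equiv]
    have heq : ((fun u : EuclideanSpace ℝ (Fin d) => Real.exp (t * ‖u‖ ^ 2)) ∘
        (MeasurableEquiv.toLp 2 (Fin d → ℝ)))
        = fun v : Fin d → ℝ => ∏ i, Real.exp (t * v i ^ 2) := funext fun v => hnorm v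
    rw [heq]
    exact pi_prod_integrable d _ (gauss1d_mgf ht).2
  · unfold _root_.stdGaussian
    rw [integral_map_equiv]
    simp_rw [hnorm]
    rw [pi_prod_integral d (fun s => Real.exp (t * s ^ 2)), (gauss1d_mgf ht).1,
      ← Real.rpow_natCast ((1 - 2 * t) ^ (-(1 : ℝ) / 2)) d, ← Real.rpow_mul (by linarith)]
    congr 1
    push_cast
    ring

lemma integrable_norm_pow (d n : ℕ) :
    Integrable (fun u : EuclideanSpace ℝ (Fin d) => ‖u‖ ^ n) (stdGaussian d) := by
  rcases Nat.eq_zero_or_pos n with h | h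
  · simp only [h, pow_zero]
    exact integrable_const 1
  · have hmgf := (stdGaussian_mgf d (t := 1 / 4) (by norm_num)).1
    have hppos : (0 : ℝ) < (n : ℝ) / 2 := by
      have : (0 : ℝ) < n := by exact_mod_cast h
      linarith
    set C := ((n : ℝ) / 2 / (Real.exp 1 * (1 / 4))) ^ ((n : ℝ) / 2) with hC
    have hCpos : 0 ≤ C := Real.rpow_nonneg (by positivity) _
    apply Integrable.mono (hmgf.const_mul C)
      ((continuous_norm.pow n).aestronglyMeasurable)
    filter_upwards with u
    rw [Real.norm_eq_abs, Real.norm_eq_abs, abs_of_nonneg (a := ((fun a : EuclideanSpace ℝ (Fin d) => ‖a‖) ^ n) u)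
      (pow_nonneg (norm_nonneg u) n),
      abs_of_nonneg (mul_nonneg hCpos (Real.exp_pos _).le)]
    calc ‖u‖ ^ n = (‖u‖ ^ 2) ^ ((n : ℝ) / 2) := aux_pow_half _ (norm_nonneg u) n
      _ ≤ C * Real.exp (1 / 4 * ‖u‖ ^ 2) :=
          aux_rpow_le_exp (by positivity) (by norm_num) hppos

lemma moment_le (d m : ℕ) (hd : 1 ≤ d) (hm : 1 ≤ m) :
    ∫ u, ‖u‖ ^ m ∂(stdGaussian d) ≤ ((m + d : ℕ) : ℝ) ^ ((m : ℝ) / 2) := by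
  have hDpos : (0 : ℝ) < (d : ℝ) := by exact_mod_cast hd
  have hPpos : (0 : ℝ) < (m : ℝ) / 2 := by
    have : (0 : ℝ) < m := by exact_mod_cast hm
    linarith
  set t := ((m : ℝ) / 2) / ((d : ℝ) + 2 * ((m : ℝ) / 2)) with htdef
  have hden : (0 : ℝ) < (d : ℝ) + 2 * ((m : ℝ) / 2) := by positivity
  have htpos : 0 < t := div_pos hPpos hden
  have htlt : t < 1 / 2 := by
    rw [htdef, div_lt_iff₀ hden]
    linarith
  obtain ⟨hint, heq⟩ := stdGaussian_mgf d htlt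
  set C := ((m : ℝ) / 2 / (Real.exp 1 * t)) ^ ((m : ℝ) / 2) with hC
  have key : ∀ u : EuclideanSpace ℝ (Fin d),
      ‖u‖ ^ m ≤ C * Real.exp (t * ‖u‖ ^ 2) := fun u => by
    rw [aux_pow_half _ (norm_nonneg u) m]
    exact aux_rpow_le_exp (by positivity) htpos hPpos
  calc ∫ u, ‖u‖ ^ m ∂(stdGaussian d)
      ≤ ∫ u, C * Real.exp (t * ‖u‖ ^ 2) ∂(stdGaussian d) :=
        integral_mono (integrable_norm_pow d m) (hint.const_mul C) key
    _ = C * (1 - 2 * t) ^ (-(d : ℝ) / 2) := by rw [integral_const_mul, heq]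
    _ ≤ ((d : ℝ) + 2 * ((m : ℝ) / 2)) ^ ((m : ℝ) / 2) := by
        rw [hC, htdef]
        exact aux_final (d : ℝ) ((m : ℝ) / 2) hDpos hPpos
    _ = ((m + d : ℕ) : ℝ) ^ ((m : ℝ) / 2) := by
        congr 1
        push_cast
        ring

lemma spb_cont {d : ℕ} {f : EuclideanSpace ℝ (Fin d) → ℝ} {R1 R2 : ℝ} {m : ℕ}
    (hf : SPBGrowth f R1 R2 m) : Continuous f := by
  rw [continuous_iff_continuousAt]
  intro a
  rw [ContinuousAt, tendsto_iff_dist_tendsto_zero]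
  have hb : ∀ y, dist (f y) (f a)
      ≤ ((2 : ℝ) ^ ((m : ℤ) - 1) * R1 * ‖a‖ ^ m
          + (2 : ℝ) ^ ((m : ℤ) - 1) * R1 * ‖y - a‖ ^ m + R2) * ‖a - y‖ := fun y => by
    rw [Real.dist_eq, abs_sub_comm]
    exact hf a y
  have h0 : Tendsto (fun y : EuclideanSpace ℝ (Fin d) =>
      ((2 : ℝ) ^ ((m : ℤ) - 1) * R1 * ‖a‖ ^ m
        + (2 : ℝ) ^ ((m : ℤ) - 1) * R1 * ‖y - a‖ ^ m + R2) * ‖a - y‖) (𝓝 a) (𝓝 0) := by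
    have hc : Continuous (fun y : EuclideanSpace ℝ (Fin d) =>
        ((2 : ℝ) ^ ((m : ℤ) - 1) * R1 * ‖a‖ ^ m
          + (2 : ℝ) ^ ((m : ℤ) - 1) * R1 * ‖y - a‖ ^ m + R2) * ‖a - y‖) := by fun_prop
    have := hc.tendsto a
    simpa using this
  exact squeeze_zero (fun y => dist_nonneg) hb h0

lemma integrable_comp {d : ℕ} {f : EuclideanSpace ℝ (Fin d) → ℝ} {R1 R2 : ℝ} {m : ℕ}
    (hf : SPBGrowth f R1 R2 m) (hR1 : 0 ≤ R1) (hcont : Continuous f)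
    {σ : ℝ} (hσ : 0 < σ) (z : EuclideanSpace ℝ (Fin d)) :
    Integrable (fun u => f (z + σ • u)) (stdGaussian d) := by
  set c := (2 : ℝ) ^ ((m : ℤ) - 1) * R1 with hc
  have hcnn : 0 ≤ c := mul_nonneg (by positivity) hR1
  have hg : Integrable (fun u : EuclideanSpace ℝ (Fin d) =>
      |f z| + (c * ‖z‖ ^ m + R2) * σ * ‖u‖ ^ 1 + c * σ ^ (m + 1) * ‖u‖ ^ (m + 1))
      (stdGaussian d) :=
    ((integrable_const _).add ((integrable_norm_pow d 1).const_mul _)).add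
      ((integrable_norm_pow d (m + 1)).const_mul _)
  apply hg.mono (hcont.comp (by fun_prop)).aestronglyMeasurable
  filter_upwards with u
  have h1 := hf z (z + σ • u)
  rw [show z - (z + σ • u) = -(σ • u) by abel, show z + σ • u - z = σ • u by abel,
    norm_neg] at h1
  have h2 : |f (z + σ • u)| ≤ |f z| + (c * ‖z‖ ^ m + c * ‖σ • u‖ ^ m + R2) * ‖σ • u‖ := by
    have h3 := abs_sub_abs_le_abs_sub (f (z + σ • u)) (f z)
    rw [abs_sub_comm] at h3
    rw [← hc] at h1
    linarith
  have h4 : |f z| + (c * ‖z‖ ^ m + c * ‖σ • u‖ ^ m + R2) * ‖σ • u‖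
      = |f z| + (c * ‖z‖ ^ m + R2) * σ * ‖u‖ ^ 1 + c * σ ^ (m + 1) * ‖u‖ ^ (m + 1) := by
    rw [norm_smul, Real.norm_eq_abs, abs_of_pos hσ, mul_pow]
    ring
  rw [Real.norm_eq_abs]
  refine (h2.trans_eq h4).trans (le_abs_self _)

end Aux

/-- Theorem 3.5(i). Lipschitz-type growth bound for `f_σ`:
`|f_σ(x) - f_σ(y)| ≤ (𝔄 + 𝔅 ‖x‖^m + ℭ ‖y - x‖^m) ‖x - y‖` with
`𝔄 = 2^{2m-2} R₁ σ^m (m + d)^{m/2} + R₂`, `𝔅 = 2^{2m-2} R₁`, `ℭ = 2^{m-1} R₁`. -/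
theorem gsmooth_growth {d : ℕ} (hd : 1 ≤ d) (f : EuclideanSpace ℝ (Fin d) → ℝ)
    (R1 R2 : ℝ) (m : ℕ) (hR1 : 0 ≤ R1) (hR2 : 0 < R2) (hR1m : R1 = 0 ↔ m = 0)
    (hf : SPBGrowth f R1 R2 m) (σ : ℝ) (hσ : 0 < σ) (x y : EuclideanSpace ℝ (Fin d)) :
    |gsmooth σ f x - gsmooth σ f y| ≤
      (((2 : ℝ) ^ (2 * (m : ℤ) - 2) * R1 * σ ^ m * ((m + d : ℕ) : ℝ) ^ ((m : ℝ) / 2) + R2)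
        + (2 : ℝ) ^ (2 * (m : ℤ) - 2) * R1 * ‖x‖ ^ m
        + (2 : ℝ) ^ ((m : ℤ) - 1) * R1 * ‖y - x‖ ^ m) * ‖x - y‖ := by
  have hcont := spb_cont hf
  have hix := integrable_comp hf hR1 hcont hσ x
  have hiy := integrable_comp hf hR1 hcont hσ y
  have hdiff : gsmooth σ f x - gsmooth σ f y
      = ∫ u, (f (x + σ • u) - f (y + σ • u)) ∂(stdGaussian d) := (integral_sub hix hiy).symm
  have habs : |∫ u, (f (x + σ • u) - f (y + σ • u)) ∂(stdGaussian d)|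
      ≤ ∫ u, |f (x + σ • u) - f (y + σ • u)| ∂(stdGaussian d) := by
    simpa [Real.norm_eq_abs] using norm_integral_le_integral_norm (μ := stdGaussian d)
      (f := fun u => f (x + σ • u) - f (y + σ • u))
  rcases Nat.eq_zero_or_pos m with hm | hm
  · -- m = 0, R1 = 0
    have hR0 : R1 = 0 := hR1m.mpr hm
    rw [hdiff]
    refine habs.trans ?_
    have h2 : ∫ u, |f (x + σ • u) - f (y + σ • u)| ∂(stdGaussian d)
        ≤ ∫ _u, R2 * ‖x - y‖ ∂(stdGaussian d) := by
      refine integral_mono (hix.sub hiy).abs (integrable_const _) fun u => ?_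
      have h := hf (x + σ • u) (y + σ • u)
      rw [add_sub_add_right_eq_sub, add_sub_add_right_eq_sub] at h
      simpa [hR0] using h
    refine h2.trans ?_
    rw [integral_const]
    simp [hR0, measure_univ]
  · -- m ≥ 1
    have e1 : (2 : ℝ) ^ ((m : ℤ) - 1) = 2 ^ (m - 1) := by
      rw [show (m : ℤ) - 1 = ((m - 1 : ℕ) : ℤ) by omega, zpow_natCast]
    have e3 : (2 : ℝ) ^ (2 * (m : ℤ) - 2) = 2 ^ (m - 1) * 2 ^ (m - 1) := by
      rw [show 2 * (m : ℤ) - 2 = ((m - 1 + (m - 1) : ℕ) : ℤ) by omega, zpow_natCast, pow_add]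
    set K : ℝ := ((m + d : ℕ) : ℝ) ^ ((m : ℝ) / 2) with hK
    set A1 : ℝ := ((2 : ℝ) ^ (2 * (m : ℤ) - 2) * R1 * ‖x‖ ^ m
      + (2 : ℝ) ^ ((m : ℤ) - 1) * R1 * ‖y - x‖ ^ m + R2) * ‖x - y‖ with hA1
    set A2 : ℝ := (2 : ℝ) ^ (2 * (m : ℤ) - 2) * R1 * σ ^ m * ‖x - y‖ with hA2
    have hA2nn : 0 ≤ A2 := by
      rw [hA2]
      exact mul_nonneg (mul_nonneg (mul_nonneg (by positivity) hR1) (by positivity))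
        (norm_nonneg _)
    have key : ∀ u : EuclideanSpace ℝ (Fin d),
        |f (x + σ • u) - f (y + σ • u)| ≤ A1 + A2 * ‖u‖ ^ m := by
      intro u
      have h := hf (x + σ • u) (y + σ • u)
      rw [add_sub_add_right_eq_sub, add_sub_add_right_eq_sub] at h
      refine h.trans ?_
      have hb : ‖x + σ • u‖ ^ m ≤ 2 ^ (m - 1) * (‖x‖ ^ m + σ ^ m * ‖u‖ ^ m) := by
        calc ‖x + σ • u‖ ^ m ≤ (‖x‖ + ‖σ • u‖) ^ m :=
              pow_le_pow_left₀ (norm_nonneg _) (norm_add_le _ _) m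
          _ ≤ 2 ^ (m - 1) * (‖x‖ ^ m + ‖σ • u‖ ^ m) :=
              add_pow_le (norm_nonneg _) (norm_nonneg _) m
          _ = 2 ^ (m - 1) * (‖x‖ ^ m + σ ^ m * ‖u‖ ^ m) := by
              rw [norm_smul, Real.norm_eq_abs, abs_of_pos hσ, mul_pow]
      have hc2 : (0 : ℝ) ≤ (2 : ℝ) ^ ((m : ℤ) - 1) * R1 := mul_nonneg (by positivity) hR1
      calc ((2 : ℝ) ^ ((m : ℤ) - 1) * R1 * ‖x + σ • u‖ ^ m
            + (2 : ℝ) ^ ((m : ℤ) - 1) * R1 * ‖y - x‖ ^ m + R2) * ‖x - y‖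
          ≤ ((2 : ℝ) ^ ((m : ℤ) - 1) * R1 * (2 ^ (m - 1) * (‖x‖ ^ m + σ ^ m * ‖u‖ ^ m))
            + (2 : ℝ) ^ ((m : ℤ) - 1) * R1 * ‖y - x‖ ^ m + R2) * ‖x - y‖ := by
            refine mul_le_mul_of_nonneg_right (add_le_add_left (add_le_add_left ?_ _) _)
              (norm_nonneg _)
            exact mul_le_mul_of_nonneg_left hb hc2
        _ = A1 + A2 * ‖u‖ ^ m := by
            rw [hA1, hA2, e1, e3]
            ring
    rw [hdiff]
    refine habs.trans ?_
    calc ∫ u, |f (x + σ • u) - f (y + σ • u)| ∂(stdGaussian d)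
        ≤ ∫ u, (A1 + A2 * ‖u‖ ^ m) ∂(stdGaussian d) :=
          integral_mono (hix.sub hiy).abs
            ((integrable_const A1).add ((integrable_norm_pow d m).const_mul A2)) key
      _ = A1 + A2 * ∫ u, ‖u‖ ^ m ∂(stdGaussian d) := by
          rw [integral_add (integrable_const _) ((integrable_norm_pow d m).const_mul _)]
          congr 1
          · simp [integral_const, measure_univ]
          · exact integral_const_mul A2 _
      _ ≤ A1 + A2 * K := by
          rw [hK]
          exact add_le_add_right (mul_le_mul_of_nonneg_left (moment_le d m hd hm) hA2nn) A1
      _ = (((2 : ℝ) ^ (2 * (m : ℤ) - 2) * R1 * σ ^ m * ((m + d : ℕ) : ℝ) ^ ((m : ℝ) / 2) + R2)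
            + (2 : ℝ) ^ (2 * (m : ℤ) - 2) * R1 * ‖x‖ ^ m
            + (2 : ℝ) ^ ((m : ℤ) - 1) * R1 * ‖y - x‖ ^ m) * ‖x - y‖ := by
          rw [hA1, hA2, hK]
          ring
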